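/- Let U : Hilbr → Set preserve directed colimits, and suppose λ₀ is a cardinal with 2^{ℵ₀} ≤ λ₀ and |U(Fⁿ)| ≤ λ₀ for all n ∈ ℕ. Then for every cardinal λ ≥ λ₀, |U(ℓ²(λ))| ≤ λ. -/

import Mathlib

open CategoryTheory CategoryTheory.Limits

/-- The category `Hilbr` of Hilbert spaces over `𝕜` (`ℝ` or `ℂ`) and linear isometric
embeddings. -/
structure HilbCat (𝕜 : Type) [RCLike 𝕜] : Type 1 where
  carrier : Type
  [nacg : NormedAddCommGroup carrier]
  [ips : InnerProductSpace 𝕜 carrier]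
  [cs : CompleteSpace carrier]

attribute [instance] HilbCat.nacg HilbCat.ips HilbCat.cs

variable {𝕜 : Type} [RCLike 𝕜]

instance : Category (HilbCat 𝕜) where
  Hom A B := A.carrier →ₗᵢ[𝕜] B.carrier
  id A := LinearIsometry.id
  comp f g := g.comp f
  id_comp f := rfl
  comp_id f := rfl
  assoc f g h := rfl

/-- View a morphism of `HilbCat` as a linear isometry. -/
def homFn {A B : HilbCat 𝕜} (f : A ⟶ B) : A.carrier →ₗᵢ[𝕜] B.carrier := f

/-- View a linear isometry as a morphism of `HilbCat`. -/
def toHom {A B : HilbCat 𝕜} (f : A.carrier →ₗᵢ[𝕜] B.carrier) : A ⟶ B := f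

/-- A functor preserves directed colimits if it preserves colimits of shape `J` for every
nonempty directed preorder `J`. -/
def PreservesDirectedColimits {C : Type*} [Category C] (U : C ⥤ Type) : Prop :=
  ∀ (J : Type) [Preorder J] [IsDirected J (· ≤ ·)] [Nonempty J],
    Nonempty (PreservesColimitsOfShape J U)

/-- `x ∈ U(A)` is supported on the subspace `A₀ ⊆ A` if any two morphisms out of `A`
agreeing on `A₀` are equalized by `x`. -/
def SuppOn (U : HilbCat 𝕜 ⥤ Type) (A : HilbCat 𝕜) (A₀ : Submodule 𝕜 A.carrier)
    (x : U.obj A) : Prop :=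
  ∀ (B : HilbCat 𝕜) (f g : A ⟶ B), (∀ a ∈ A₀, homFn f a = homFn g a) →
    U.map f x = U.map g x

/-- The Hilbert space `ℓ²(X)` as an object of `HilbCat`. -/
noncomputable def lpObj (𝕜 : Type) [RCLike 𝕜] (X : Type) : HilbCat 𝕜 :=
  ⟨lp (fun _ : X => 𝕜) 2⟩

/-- `A` has Hilbert dimension `c`: it admits an orthonormal (Hilbert) basis indexed by a type
of cardinality `c`. -/
def HasHilbertDim (A : HilbCat 𝕜) (c : Cardinal) : Prop :=
  ∃ (ι : Type) (_ : HilbertBasis ι 𝕜 A.carrier), Cardinal.mk ι = c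

/-- `A` has Hilbert dimension `≥ c`. -/
def HasHilbertDimGE (A : HilbCat 𝕜) (c : Cardinal) : Prop :=
  ∃ (ι : Type) (_ : HilbertBasis ι 𝕜 A.carrier), c ≤ Cardinal.mk ι

/-- The Euclidean space `𝕜ⁿ` as an object of `HilbCat`. -/
noncomputable def euclObj (𝕜 : Type) [RCLike 𝕜] (n : ℕ) : HilbCat 𝕜 :=
  ⟨EuclideanSpace 𝕜 (Fin n)⟩


section AuxStmt11

open Submodule

variable (𝕜 : Type) [RCLike 𝕜] (X : Type)

/-- The standard Hilbert basis of `ℓ²(X)`. -/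
noncomputable def stdB : HilbertBasis X 𝕜 (lpObj 𝕜 X).carrier :=
  HilbertBasis.ofRepr (LinearIsometryEquiv.refl 𝕜 _)

/-- The finite-dimensional subspace spanned by basis vectors indexed by `S`. -/
noncomputable def spanS (S : Finset X) : Submodule 𝕜 (lpObj 𝕜 X).carrier :=
  Submodule.span 𝕜 (⇑(stdB 𝕜 X) '' ↑S)

instance (S : Finset X) : FiniteDimensional 𝕜 (spanS 𝕜 X S) :=
  FiniteDimensional.span_of_finite 𝕜 (S.finite_toSet.image _)

/-- The subspace `spanS` as an object of `HilbCat`. -/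
noncomputable def spanObj (S : Finset X) : HilbCat 𝕜 :=
  ⟨spanS 𝕜 X S⟩

/-- Inclusion of nested submodules as a linear isometry. -/
noncomputable def inclLI {E : Type} [NormedAddCommGroup E] [InnerProductSpace 𝕜 E]
    {p q : Submodule 𝕜 E} (h : p ≤ q) : p →ₗᵢ[𝕜] q :=
  ⟨Submodule.inclusion h, fun _ => rfl⟩

theorem spanS_mono {S T : Finset X} (h : S ≤ T) : spanS 𝕜 X S ≤ spanS 𝕜 X T :=
  Submodule.span_mono (Set.image_mono h)

theorem spanS_le_span (S : Finset X) :
    spanS 𝕜 X S ≤ Submodule.span 𝕜 (Set.range ⇑(stdB 𝕜 X)) :=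
  Submodule.span_mono (Set.image_subset_range _ _)

theorem mem_spanS_self (x : X) :
    stdB 𝕜 X x ∈ spanS 𝕜 X {x} :=
  Submodule.subset_span (Set.mem_image_of_mem _ (by simp))

/-- The directed diagram of finite-dimensional subspaces. -/
noncomputable def spanDiagram : Finset X ⥤ HilbCat 𝕜 where
  obj := spanObj 𝕜 X
  map {S T} f := toHom (inclLI 𝕜 (spanS_mono 𝕜 X (leOfHom f)))
  map_id S := LinearIsometry.ext fun x => rfl
  map_comp f g := LinearIsometry.ext fun x => rfl

/-- The cocone over `spanDiagram` with cocone point `ℓ²(X)`. -/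
noncomputable def spanCocone : Cocone (spanDiagram 𝕜 X) where
  pt := lpObj 𝕜 X
  ι :=
    { app := fun S => toHom (spanS 𝕜 X S).subtypeₗᵢ
      naturality := fun S T f => LinearIsometry.ext fun x => rfl }

theorem homFn_comp {A B C : HilbCat 𝕜} (f : A ⟶ B) (g : B ⟶ C) (x : A.carrier) :
    homFn (f ≫ g) x = homFn g (homFn f x) := rfl

theorem spanDiagram_map_eq {S T : Finset X} (f : S ⟶ T) (z : spanS 𝕜 X S) :
    homFn ((spanDiagram 𝕜 X).map f) z
      = ⟨(z : (lpObj 𝕜 X).carrier), spanS_mono 𝕜 X (leOfHom f) z.2⟩ := rfl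

theorem spanCocone_app_coe (S : Finset X) (z : spanS 𝕜 X S) :
    homFn ((spanCocone 𝕜 X).ι.app S) z = (z : (lpObj 𝕜 X).carrier) := rfl

theorem span_range_eq_iSup :
    Submodule.span 𝕜 (Set.range ⇑(stdB 𝕜 X)) = ⨆ S : Finset X, spanS 𝕜 X S := by
  apply le_antisymm
  · rw [Submodule.span_le]
    rintro _ ⟨x, rfl⟩
    exact (le_iSup (spanS 𝕜 X) {x} : spanS 𝕜 X {x} ≤ _) (mem_spanS_self 𝕜 X x)
  · exact iSup_le fun S => spanS_le_span 𝕜 X S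

theorem spanS_directed : Directed (· ≤ ·) (spanS 𝕜 X) := fun S T => by
  classical
  exact ⟨S ∪ T, spanS_mono 𝕜 X Finset.subset_union_left,
    spanS_mono 𝕜 X Finset.subset_union_right⟩

theorem exists_spanS_mem {v : (lpObj 𝕜 X).carrier}
    (hv : v ∈ Submodule.span 𝕜 (Set.range ⇑(stdB 𝕜 X))) : ∃ S : Finset X, v ∈ spanS 𝕜 X S := by
  rw [span_range_eq_iSup] at hv
  exact (Submodule.mem_iSup_of_directed _ (spanS_directed 𝕜 X)).mp hv

theorem span_range_dense :
    Dense ((Submodule.span 𝕜 (Set.range ⇑(stdB 𝕜 X)) :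
      Submodule 𝕜 (lpObj 𝕜 X).carrier) : Set (lpObj 𝕜 X).carrier) :=
  Submodule.dense_iff_topologicalClosure_eq_top.mpr (stdB 𝕜 X).dense_span

/-- The basis of the (algebraic) span of the Hilbert basis vectors. -/
noncomputable def spanBasis : Module.Basis X 𝕜 (Submodule.span 𝕜 (Set.range ⇑(stdB 𝕜 X))) :=
  Module.Basis.span (stdB 𝕜 X).orthonormal.linearIndependent

variable {𝕜 X}

/-- The algebraic descent map on the span, for a cocone `s`. -/
noncomputable def g0 (s : Cocone (spanDiagram 𝕜 X)) :
    Submodule.span 𝕜 (Set.range ⇑(stdB 𝕜 X)) →ₗ[𝕜] s.pt.carrier :=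
  (spanBasis 𝕜 X).constr ℕ fun x => homFn (s.ι.app {x}) ⟨stdB 𝕜 X x, mem_spanS_self 𝕜 X x⟩

theorem g0_basis (s : Cocone (spanDiagram 𝕜 X)) (x : X) :
    g0 s (spanBasis 𝕜 X x)
      = homFn (s.ι.app {x}) ⟨stdB 𝕜 X x, mem_spanS_self 𝕜 X x⟩ := by
  unfold g0
  apply Module.Basis.constr_basis

theorem g0_eq (s : Cocone (spanDiagram 𝕜 X)) (S : Finset X) (v : (lpObj 𝕜 X).carrier)
    (hv : v ∈ spanS 𝕜 X S) :
    g0 s ⟨v, spanS_le_span 𝕜 X S hv⟩ = homFn (s.ι.app S) ⟨v, hv⟩ := by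
  induction hv using Submodule.span_induction with
  | mem w hw =>
    obtain ⟨x, hxS, rfl⟩ := hw
    have hxs : ({x} : Finset X) ≤ S := by
      simpa [Finset.singleton_subset_iff] using hxS
    have h1 : ∀ p, (⟨stdB 𝕜 X x, p⟩ :
        Submodule.span 𝕜 (Set.range ⇑(stdB 𝕜 X))) = spanBasis 𝕜 X x := fun p =>
      Subtype.ext (congrArg Subtype.val (Module.Basis.span_apply ((stdB 𝕜 X).orthonormal.linearIndependent) x)).symm
    erw [h1, g0_basis, ← s.w (homOfLE hxs), homFn_comp]
  | zero =>
    have h0 : (⟨(0 : (lpObj 𝕜 X).carrier), spanS_le_span 𝕜 X S (Submodule.zero_mem _)⟩ :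
        Submodule.span 𝕜 (Set.range ⇑(stdB 𝕜 X))) = 0 := rfl
    have h0' : (⟨(0 : (lpObj 𝕜 X).carrier), Submodule.zero_mem _⟩ : spanS 𝕜 X S) = 0 := rfl
    erw [h0, h0', map_zero, map_zero]
  | add x y hx hy ihx ihy =>
    have hx' : (⟨x + y, spanS_le_span 𝕜 X S (Submodule.add_mem _ hx hy)⟩ :
        Submodule.span 𝕜 (Set.range ⇑(stdB 𝕜 X)))
        = ⟨x, spanS_le_span 𝕜 X S hx⟩ + ⟨y, spanS_le_span 𝕜 X S hy⟩ := rfl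
    have hy' : (⟨x + y, Submodule.add_mem _ hx hy⟩ : spanS 𝕜 X S)
        = ⟨x, hx⟩ + ⟨y, hy⟩ := rfl
    erw [hx', hy', map_add, map_add, ihx, ihy]
  | smul a x hx ih =>
    have hx' : (⟨a • x, spanS_le_span 𝕜 X S (Submodule.smul_mem _ a hx)⟩ :
        Submodule.span 𝕜 (Set.range ⇑(stdB 𝕜 X)))
        = a • ⟨x, spanS_le_span 𝕜 X S hx⟩ := rfl
    have hy' : (⟨a • x, Submodule.smul_mem _ a hx⟩ : spanS 𝕜 X S) = a • ⟨x, hx⟩ := rfl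
    erw [hx', hy', map_smul, map_smul, ih]

theorem g0_norm (s : Cocone (spanDiagram 𝕜 X))
    (v : Submodule.span 𝕜 (Set.range ⇑(stdB 𝕜 X))) : ‖g0 s v‖ = ‖v‖ := by
  obtain ⟨S, hS⟩ := exists_spanS_mem 𝕜 X v.2
  have h := g0_eq s S v.1 hS
  have hv : (⟨v.1, spanS_le_span 𝕜 X S hS⟩ :
      Submodule.span 𝕜 (Set.range ⇑(stdB 𝕜 X))) = v := rfl
  rw [hv] at h
  erw [h, (homFn (s.ι.app S)).norm_map]
  rfl

/-- The continuous extension of `g0` to all of `ℓ²(X)`. -/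
noncomputable def descCLM (s : Cocone (spanDiagram 𝕜 X)) :
    (lpObj 𝕜 X).carrier →L[𝕜] s.pt.carrier :=
  ContinuousLinearMap.extend
    (LinearMap.mkContinuous (g0 s) 1 (fun v => by rw [g0_norm, one_mul]))
    (Submodule.span 𝕜 (Set.range ⇑(stdB 𝕜 X))).subtypeL

theorem descCLM_eq (s : Cocone (spanDiagram 𝕜 X))
    (v : Submodule.span 𝕜 (Set.range ⇑(stdB 𝕜 X))) : descCLM s (v : (lpObj 𝕜 X).carrier) = g0 s v :=
  ContinuousLinearMap.extend_eq _
    (by simpa [DenseRange, Submodule.coe_subtypeL', Subtype.range_coe_subtype]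
        using span_range_dense 𝕜 X)
    isometry_subtype_coe.isUniformInducing v

theorem descCLM_app (s : Cocone (spanDiagram 𝕜 X)) (S : Finset X) (x : spanS 𝕜 X S) :
    descCLM s (x : (lpObj 𝕜 X).carrier) = homFn (s.ι.app S) x := by
  have := descCLM_eq s ⟨x.1, spanS_le_span 𝕜 X S x.2⟩
  rw [this, g0_eq s S x.1 x.2]

theorem descCLM_norm (s : Cocone (spanDiagram 𝕜 X)) (v : (lpObj 𝕜 X).carrier) :
    ‖descCLM s v‖ = ‖v‖ := by
  have hclosed : IsClosed {v : (lpObj 𝕜 X).carrier | ‖descCLM s v‖ = ‖v‖} :=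
    isClosed_eq (continuous_norm.comp (descCLM s).continuous) continuous_norm
  have hsub : ((Submodule.span 𝕜 (Set.range ⇑(stdB 𝕜 X)) :
      Submodule 𝕜 (lpObj 𝕜 X).carrier) : Set (lpObj 𝕜 X).carrier)
      ⊆ {v : (lpObj 𝕜 X).carrier | ‖descCLM s v‖ = ‖v‖} := by
    intro v hv
    have := descCLM_eq s ⟨v, hv⟩
    simp only [Set.mem_setOf_eq, this]
    have := g0_norm s ⟨v, hv⟩
    simpa using this
  have := (span_range_dense 𝕜 X).closure_eq
  have hmem : v ∈ closure ((Submodule.span 𝕜 (Set.range ⇑(stdB 𝕜 X)) :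
      Submodule 𝕜 (lpObj 𝕜 X).carrier) : Set (lpObj 𝕜 X).carrier) := by
    rw [this]; trivial
  have h := closure_mono hsub hmem
  rwa [hclosed.closure_eq] at h

/-- The descent linear isometry. -/
noncomputable def descLI (s : Cocone (spanDiagram 𝕜 X)) :
    (lpObj 𝕜 X).carrier →ₗᵢ[𝕜] s.pt.carrier :=
  ⟨(descCLM s).toLinearMap, descCLM_norm s⟩

variable (𝕜 X) in
/-- `ℓ²(X)` is the colimit of its finite-dimensional coordinate subspaces. -/
noncomputable def spanIsColimit : IsColimit (spanCocone 𝕜 X) where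
  desc s := toHom (descLI s)
  fac s S := LinearIsometry.ext fun x => descCLM_app s S x
  uniq s m hm := by
    refine LinearIsometry.ext fun v => ?_
    have hclosed : IsClosed {v : (lpObj 𝕜 X).carrier | homFn m v = descLI s v} :=
      isClosed_eq (homFn m).continuous (descLI s).continuous
    have hsub : ((Submodule.span 𝕜 (Set.range ⇑(stdB 𝕜 X)) :
        Submodule 𝕜 (lpObj 𝕜 X).carrier) : Set (lpObj 𝕜 X).carrier)
        ⊆ {v : (lpObj 𝕜 X).carrier | homFn m v = descLI s v} := by
      intro v hv
      obtain ⟨S, hS⟩ := exists_spanS_mem 𝕜 X hv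
      have h1 : homFn m v = homFn ((spanCocone 𝕜 X).ι.app S ≫ m) (⟨v, hS⟩ : spanS 𝕜 X S) := by
        erw [homFn_comp, spanCocone_app_coe]
      have h2 : descLI s v = homFn (s.ι.app S) (⟨v, hS⟩ : spanS 𝕜 X S) :=
        descCLM_app s S ⟨v, hS⟩
      show homFn m v = descLI s v
      rw [h1, hm S, h2]
      try rfl
    have hmem : v ∈ closure ((Submodule.span 𝕜 (Set.range ⇑(stdB 𝕜 X)) :
        Submodule 𝕜 (lpObj 𝕜 X).carrier) : Set (lpObj 𝕜 X).carrier) := by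
      rw [(span_range_dense 𝕜 X).closure_eq]; trivial
    have h := closure_mono hsub hmem
    rwa [hclosed.closure_eq] at h

/-- An isometric isomorphism of carriers gives an isomorphism in `HilbCat`. -/
noncomputable def isoOfLIE {A B : HilbCat 𝕜} (f : A.carrier ≃ₗᵢ[𝕜] B.carrier) : A ≅ B where
  hom := toHom f.toLinearIsometry
  inv := toHom f.symm.toLinearIsometry
  hom_inv_id := LinearIsometry.ext fun x => f.symm_apply_apply x
  inv_hom_id := LinearIsometry.ext fun x => f.apply_symm_apply x

variable (𝕜 X) in
/-- Each coordinate subspace is isometrically isomorphic to a Euclidean space. -/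
noncomputable def spanEuclEquiv (S : Finset X) :
    (spanObj 𝕜 X S).carrier ≃ₗᵢ[𝕜] (euclObj 𝕜 S.card).carrier := by
  classical
  exact (LinearIsometryEquiv.ofEq _ _
      (by rw [spanS, Finset.coe_image] :
        spanS 𝕜 X S = Submodule.span 𝕜 ((S.image ⇑(stdB 𝕜 X) : Finset _) : Set _)).symm).symm.trans
    (((OrthonormalBasis.span (stdB 𝕜 X).orthonormal S).repr).trans
      (LinearIsometryEquiv.piLpCongrLeft 2 𝕜 𝕜 S.equivFin))

end AuxStmt11

/-- If `2^ℵ₀ ≤ λ₀` and `|U(𝕜ⁿ)| ≤ λ₀` for all `n`, then `|U(ℓ²(λ))| ≤ λ` for every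
cardinal `λ ≥ λ₀`. -/
theorem stmt_11 (U : HilbCat 𝕜 ⥤ Type) (hU : PreservesDirectedColimits U)
    (lam0 : Cardinal) (h0 : 2 ^ Cardinal.aleph0 ≤ lam0)
    (hn : ∀ n : ℕ, Cardinal.mk (U.obj (euclObj 𝕜 n)) ≤ lam0) :
    ∀ (lam : Cardinal) (X : Type), lam0 ≤ lam → Cardinal.mk X = lam →
      Cardinal.mk (U.obj (lpObj 𝕜 X)) ≤ lam := by
  intro lam X hlam hX
  classical
  have haleph : Cardinal.aleph0 ≤ lam :=
    le_trans (le_trans (Cardinal.cantor _).le h0) hlam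
  haveI : Infinite X := by
    rw [Cardinal.infinite_iff, hX]; exact haleph
  obtain ⟨pc⟩ := hU (Finset X)
  have hcolim := isColimitOfPreserves U (spanIsColimit 𝕜 X)
  have hsurj : Function.Surjective (fun p : Σ S : Finset X, U.obj (spanObj 𝕜 X S) =>
      ((U.mapCocone (spanCocone 𝕜 X)).ι.app p.1 p.2 : U.obj (lpObj 𝕜 X))) := by
    intro x
    obtain ⟨S, y, hy⟩ := Types.jointly_surjective _ hcolim x
    exact ⟨⟨S, y⟩, hy⟩
  have h1 := Cardinal.mk_le_of_surjective hsurj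
  rw [Cardinal.mk_sigma] at h1
  have h2 : ∀ S : Finset X, Cardinal.mk (U.obj (spanObj 𝕜 X S)) ≤ lam0 := fun S =>
    le_trans (le_of_eq (Cardinal.mk_congr
      ((U.mapIso (isoOfLIE (spanEuclEquiv 𝕜 X S))).toEquiv))) (hn S.card)
  calc Cardinal.mk (U.obj (lpObj 𝕜 X)) ≤ _ := h1
    _ ≤ Cardinal.sum (fun _ : Finset X => lam0) := Cardinal.sum_le_sum _ _ h2
    _ = Cardinal.mk (Finset X) * lam0 := Cardinal.sum_const' _ _
    _ = lam * lam0 := by rw [Cardinal.mk_finset_of_infinite, hX]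
    _ ≤ lam * lam := mul_le_mul' le_rfl hlam
    _ = lam := Cardinal.mul_eq_self haleph
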